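/- Efron–Stein inequality: Let X₁, …, Xₙ be independent (not necessarily identically distributed) random variables taking values in a measurable space χ, let g : χⁿ → ℝ be measurable with Z = g(X₁, …, Xₙ) square-integrable, and for each i let Eᵢ[Z] = E[Z | X₁, …, Xᵢ₋₁, Xᵢ₊₁, …, Xₙ] denote the conditional expectation of Z given all coordinates except the i-th. Then Var(Z) ≤ Σᵢ₌₁ⁿ E[ (Z − Eᵢ[Z])² ]. -/

import Mathlib

open MeasureTheory ProbabilityTheory Real MeasurableSpace

lemma mul_integrable_of_memℒp_two {Ω : Type*} {m0 : MeasurableSpace Ω} {μ : Measure Ω}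
    {f g : Ω → ℝ} (hf : MemLp f 2 μ) (hg : MemLp g 2 μ) :
    Integrable (fun ω => f ω * g ω) μ := by
  have h : MemLp (g • f) 1 μ := hf.smul hg (hpqr := ⟨by simp [ENNReal.inv_two_add_inv_two]⟩)
  exact (memLp_one_iff_integrable.mp h).congr (Filter.Eventually.of_forall fun ω => by
    simp [smul_eq_mul, mul_comm])

lemma memℒp_two_condexp {Ω : Type*} {m m0 : MeasurableSpace Ω} {μ : Measure Ω}
    [IsFiniteMeasure μ] (hm : m ≤ m0)
    {f : Ω → ℝ} (hf : MemLp f 2 μ) : MemLp (μ[f|m]) 2 μ := by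
  have hF : μ[f|m] =ᵐ[μ] (condExpL2 ℝ ℝ hm (hf.toLp f) : Ω → ℝ) := by
    refine (ae_eq_condExp_of_forall_setIntegral_eq hm (hf.integrable one_le_two)
      (fun s hs hμs => integrableOn_condExpL2_of_measure_ne_top hm hμs.ne _)
      (fun s hs hμs => ?_) (aestronglyMeasurable_condExpL2 hm _)).symm
    rw [integral_condExpL2_eq hm (hf.toLp f) hs hμs.ne]
    exact setIntegral_congr_ae (hm s hs) ((hf.coeFn_toLp).mono fun x hx _ => hx)
  exact (Lp.memLp ((condExpL2 ℝ ℝ hm (hf.toLp f) : lpMeas ℝ ℝ m 2 μ) : Lp ℝ 2 μ)).ae_eq hF.symm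

lemma indepFun_of_measurable_of_indep {Ω : Type*} {m' m₂ m0 : MeasurableSpace Ω} {μ : Measure Ω}
    (hindep : Indep m' m₂ μ) {F G : Ω → ℝ}
    (hF : Measurable[m'] F) (hG : Measurable[m₂] G) : IndepFun F G μ := by
  rw [indepFun_iff_measure_inter_preimage_eq_mul]
  intro s t hs ht
  exact (Indep_iff _ _ _).mp hindep _ _ (hF hs) (hG ht)

lemma setIntegral_inter_eq_mul {Ω : Type*} {m' m₂ m0 : MeasurableSpace Ω} {μ : Measure Ω}
    [IsProbabilityMeasure μ] (hm' : m' ≤ m0) (hm₂ : m₂ ≤ m0) (hindep : Indep m' m₂ μ)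
    {h : Ω → ℝ} (hhm : StronglyMeasurable[m'] h) (hhi : Integrable h μ)
    {t₁ t₂ : Set Ω} (ht₁ : MeasurableSet[m'] t₁) (ht₂ : MeasurableSet[m₂] t₂) :
    ∫ ω in t₁ ∩ t₂, h ω ∂μ = (∫ ω in t₁, h ω ∂μ) * (μ t₂).toReal := by
  have hF : IndepFun (t₁.indicator h) (t₂.indicator (fun _ => (1:ℝ))) μ :=
    indepFun_of_measurable_of_indep hindep (hhm.measurable.indicator ht₁)
      (measurable_const.indicator ht₂)
  have hFi : Integrable (t₁.indicator h) μ := hhi.indicator (hm' _ ht₁)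
  have hGi : Integrable (t₂.indicator fun _ => (1:ℝ)) μ := (integrable_const 1).indicator (hm₂ _ ht₂)
  have key := IndepFun.integral_mul_eq_mul_integral hF hFi.aestronglyMeasurable hGi.aestronglyMeasurable
  calc ∫ ω in t₁ ∩ t₂, h ω ∂μ
      = ∫ ω, (t₁ ∩ t₂).indicator h ω ∂μ :=
        (integral_indicator ((hm' _ ht₁).inter (hm₂ _ ht₂))).symm
    _ = ∫ ω, t₁.indicator h ω * t₂.indicator (fun _ => 1) ω ∂μ := by
        congr 1; funext ω
        rw [← Set.inter_indicator_mul]; simp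
    _ = (∫ ω, t₁.indicator h ω ∂μ) * ∫ ω, t₂.indicator (fun _ => 1) ω ∂μ := key
    _ = (∫ ω in t₁, h ω ∂μ) * (μ t₂).toReal := by
        rw [integral_indicator (hm' _ ht₁), integral_indicator (hm₂ _ ht₂)]
        simp [Measure.real]

lemma condexp_sup_indep {Ω : Type*} {m₁ m' m₂ m0 : MeasurableSpace Ω} {μ : Measure Ω}
    [IsProbabilityMeasure μ] (hm₁' : m₁ ≤ m') (hm' : m' ≤ m0) (hm₂ : m₂ ≤ m0)
    (hindep : Indep m' m₂ μ) {f : Ω → ℝ} (hfm : StronglyMeasurable[m'] f)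
    (hfi : Integrable f μ) :
    μ[f | m₁ ⊔ m₂] =ᵐ[μ] μ[f | m₁] := by
  have hm₁ : m₁ ≤ m0 := hm₁'.trans hm'
  have hsup : m₁ ⊔ m₂ ≤ m0 := sup_le hm₁ hm₂
  set S : Set (Set Ω) := {s | ∃ t₁ t₂, MeasurableSet[m₁] t₁ ∧ MeasurableSet[m₂] t₂ ∧ s = t₁ ∩ t₂}
    with hS
  have h_eq : (m₁ ⊔ m₂) = generateFrom S := by
    refine le_antisymm (sup_le ?_ ?_) (generateFrom_le ?_)
    · exact fun t ht => measurableSet_generateFrom ⟨t, Set.univ, ht, MeasurableSet.univ, by simp⟩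
    · exact fun t ht => measurableSet_generateFrom ⟨Set.univ, t, MeasurableSet.univ, ht, by simp⟩
    · rintro t ⟨t₁, t₂, h₁, h₂, rfl⟩
      exact ((le_sup_left : m₁ ≤ m₁ ⊔ m₂) _ h₁).inter ((le_sup_right : m₂ ≤ m₁ ⊔ m₂) _ h₂)
  have hpi : IsPiSystem S := by
    rintro t ⟨t₁, t₂, h₁, h₂, rfl⟩ u ⟨u₁, u₂, g₁, g₂, rfl⟩ -
    exact ⟨t₁ ∩ u₁, t₂ ∩ u₂, h₁.inter g₁, h₂.inter g₂, Set.inter_inter_inter_comm t₁ t₂ u₁ u₂⟩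
  have key : ∀ t, MeasurableSet[m₁ ⊔ m₂] t →
      ∫ x in t, (μ[f|m₁]) x ∂μ = ∫ x in t, f x ∂μ := by
    refine fun t ht => @MeasurableSpace.induction_on_inter Ω (m₁ ⊔ m₂)
      (fun t _ => ∫ x in t, (μ[f|m₁]) x ∂μ = ∫ x in t, f x ∂μ) S h_eq hpi
      (by simp) ?_ ?_ ?_ t ht
    · rintro t ⟨t₁, t₂, h₁, h₂, rfl⟩
      rw [setIntegral_inter_eq_mul hm' hm₂ hindep (stronglyMeasurable_condExp.mono hm₁')
            integrable_condExp (hm₁' _ h₁) h₂,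
          setIntegral_inter_eq_mul hm' hm₂ hindep hfm hfi (hm₁' _ h₁) h₂,
          setIntegral_condExp hm₁ hfi h₁]
    · intro t htm iht
      rw [setIntegral_compl (hsup _ htm) integrable_condExp,
          setIntegral_compl (hsup _ htm) hfi, iht, integral_condExp hm₁]
    · intro u hdisj hmeas hint
      rw [integral_iUnion (fun i => hsup _ (hmeas i)) hdisj integrable_condExp.integrableOn,
          integral_iUnion (fun i => hsup _ (hmeas i)) hdisj hfi.integrableOn]
      exact tsum_congr hint
  exact (ae_eq_condExp_of_forall_setIntegral_eq hsup hfi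
    (fun s _ _ => integrable_condExp.integrableOn) (fun s hs _ => key s hs)
    (((stronglyMeasurable_condExp (m := m₁) (μ := μ) (f := f)).mono (le_sup_left : m₁ ≤ m₁ ⊔ m₂)).aestronglyMeasurable (μ := μ))).symm

lemma integral_sq_condexp_le {Ω : Type*} {m m0 : MeasurableSpace Ω} {μ : Measure Ω}
    [IsProbabilityMeasure μ] (hm : m ≤ m0) {W : Ω → ℝ} (hW2 : MemLp W 2 μ) :
    ∫ ω, ((μ[W|m]) ω)^2 ∂μ ≤ ∫ ω, (W ω)^2 ∂μ := by
  have hWi : Integrable W μ := hW2.integrable one_le_two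
  have hD2 : MemLp (μ[W|m]) 2 μ := memℒp_two_condexp hm hW2
  have hDWi : Integrable (fun ω => (μ[W|m]) ω * W ω) μ := mul_integrable_of_memℒp_two hD2 hW2
  have horth : ∫ ω, (μ[W|m]) ω * W ω ∂μ = ∫ ω, ((μ[W|m]) ω)^2 ∂μ := by
    rw [← integral_condExp hm (f := fun ω => (μ[W|m]) ω * W ω)]
    have hpull : μ[(fun ω => (μ[W|m]) ω * W ω)|m] =ᵐ[μ] fun ω => ((μ[W|m]) ω) ^ 2 := by
      refine (condExp_mul_of_stronglyMeasurable_left (m := m) (μ := μ)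
        (stronglyMeasurable_condExp (f := W)) hDWi hWi).trans ?_
      exact Filter.Eventually.of_forall fun ω => by simp [sq]
    rw [integral_congr_ae hpull]
  have hexp : 0 ≤ ∫ ω, (W ω - (μ[W|m]) ω)^2 ∂μ := integral_nonneg fun ω => sq_nonneg _
  have hexpand : ∫ ω, (W ω - (μ[W|m]) ω)^2 ∂μ
      = ∫ ω, (W ω)^2 ∂μ - ∫ ω, ((μ[W|m]) ω)^2 ∂μ := by
    have h1 : ∀ ω, (W ω - (μ[W|m]) ω)^2
        = ((W ω)^2 - 2*((μ[W|m]) ω * W ω)) + ((μ[W|m]) ω)^2 := fun ω => by ring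
    have hI1 : Integrable (fun a => W a ^ 2 - 2 * ((μ[W|m]) a * W a)) μ :=
      hW2.integrable_sq.sub (hDWi.const_mul 2)
    have hI2 : Integrable (fun a => ((μ[W|m]) a) ^ 2) μ := hD2.integrable_sq
    have hI3 : Integrable (fun a => W a ^ 2) μ := hW2.integrable_sq
    have hI4 : Integrable (fun a => 2 * ((μ[W|m]) a * W a)) μ := hDWi.const_mul 2
    rw [integral_congr_ae (Filter.Eventually.of_forall h1), integral_add hI1 hI2,
        integral_sub hI3 hI4, integral_const_mul, horth]
    ring
  linarith

lemma variance_eq_sum_sq_diff {Ω : Type*} {m0 : MeasurableSpace Ω} {μ : Measure Ω}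
    [IsProbabilityMeasure μ] {F : ℕ → MeasurableSpace Ω} (hFle : ∀ k, F k ≤ m0)
    (hFmono : Monotone F) (n : ℕ) {Z : Ω → ℝ} (hZ2 : MemLp Z 2 μ)
    (hF0 : F 0 = ⊥) (hFn : μ[Z | F n] = Z) :
    variance Z μ = ∑ k ∈ Finset.range n,
      ∫ ω, ((μ[Z|F (k+1)]) ω - (μ[Z|F k]) ω)^2 ∂μ := by
  have hZi : Integrable Z μ := hZ2.integrable one_le_two
  have hY2 : ∀ k, MemLp (μ[Z|F k]) 2 μ := fun k => memℒp_two_condexp (hFle k) hZ2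
  have hD2 : ∀ k, MemLp (fun ω => (μ[Z|F (k+1)]) ω - (μ[Z|F k]) ω) 2 μ :=
    fun k => (hY2 (k+1)).sub (hY2 k)
  have hDint : ∀ k l, Integrable (fun ω =>
      ((μ[Z|F (k+1)]) ω - (μ[Z|F k]) ω) * ((μ[Z|F (l+1)]) ω - (μ[Z|F l]) ω)) μ :=
    fun k l => mul_integrable_of_memℒp_two (hD2 k) (hD2 l)
  have hDsm : ∀ k, StronglyMeasurable[F (k+1)] (fun ω => (μ[Z|F (k+1)]) ω - (μ[Z|F k]) ω) :=
    fun k => stronglyMeasurable_condExp.sub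
      (stronglyMeasurable_condExp.mono (hFmono (Nat.le_succ k)))
  have hDcond : ∀ l, μ[(fun ω => (μ[Z|F (l+1)]) ω - (μ[Z|F l]) ω) | F l] =ᵐ[μ] 0 := by
    intro l
    have h1 : μ[μ[Z|F (l+1)] | F l] =ᵐ[μ] μ[Z|F l] :=
      condExp_condExp_of_le (hFmono (Nat.le_succ l)) (hFle (l+1))
    have h2 : μ[μ[Z|F l] | F l] = μ[Z|F l] :=
      condExp_of_stronglyMeasurable (hFle l) stronglyMeasurable_condExp integrable_condExp
    have h3 := condExp_sub (m := F l) (μ := μ) (f := μ[Z|F (l+1)]) (g := μ[Z|F l])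
      integrable_condExp integrable_condExp
    refine h3.trans ?_
    rw [h2]
    filter_upwards [h1] with ω hω
    simp [hω]
  have hcross : ∀ k l, k < l →
      ∫ ω, ((μ[Z|F (k+1)]) ω - (μ[Z|F k]) ω) * ((μ[Z|F (l+1)]) ω - (μ[Z|F l]) ω) ∂μ = 0 := by
    intro k l hkl
    have hUm : StronglyMeasurable[F l] (fun ω => (μ[Z|F (k+1)]) ω - (μ[Z|F k]) ω) :=
      (hDsm k).mono (hFmono hkl)
    have hpull := condExp_mul_of_stronglyMeasurable_left (m := F l) (μ := μ) hUm (hDint k l)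
      ((hD2 l).integrable one_le_two)
    have hzero : μ[(fun ω =>
        ((μ[Z|F (k+1)]) ω - (μ[Z|F k]) ω) * ((μ[Z|F (l+1)]) ω - (μ[Z|F l]) ω)) | F l]
        =ᵐ[μ] 0 := by
      refine hpull.trans ?_
      filter_upwards [hDcond l] with ω hω
      simp only [Pi.mul_apply, Pi.zero_apply] at hω ⊢
      rw [hω]; ring
    rw [← integral_condExp (hFle l) (f := fun ω =>
      ((μ[Z|F (k+1)]) ω - (μ[Z|F k]) ω) * ((μ[Z|F (l+1)]) ω - (μ[Z|F l]) ω)),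
      integral_congr_ae hzero]
    simp
  have htel : ∀ ω, Z ω - ∫ x, Z x ∂μ
      = ∑ k ∈ Finset.range n, ((μ[Z|F (k+1)]) ω - (μ[Z|F k]) ω) := by
    intro ω
    rw [Finset.sum_range_sub (f := fun k => (μ[Z|F k]) ω), hFn, hF0, condExp_bot]
  calc variance Z μ = ∫ ω, (Z ω - ∫ x, Z x ∂μ)^2 ∂μ := by
        refine (variance_eq_integral hZ2.aestronglyMeasurable.aemeasurable).trans ?_
        exact integral_congr_ae (Filter.Eventually.of_forall fun ω => by simp)
    _ = ∫ ω, (∑ k ∈ Finset.range n, ((μ[Z|F (k+1)]) ω - (μ[Z|F k]) ω))^2 ∂μ := by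
        congr 1; funext ω; rw [htel ω]
    _ = ∫ ω, ∑ k ∈ Finset.range n, ∑ l ∈ Finset.range n,
          ((μ[Z|F (k+1)]) ω - (μ[Z|F k]) ω) * ((μ[Z|F (l+1)]) ω - (μ[Z|F l]) ω) ∂μ := by
        congr 1; funext ω; rw [sq, Finset.sum_mul_sum]
    _ = ∑ k ∈ Finset.range n, ∑ l ∈ Finset.range n,
          ∫ ω, ((μ[Z|F (k+1)]) ω - (μ[Z|F k]) ω) * ((μ[Z|F (l+1)]) ω - (μ[Z|F l]) ω) ∂μ := by
        rw [integral_finset_sum _ (fun k _ => integrable_finset_sum _ (fun l _ => hDint k l))]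
        exact Finset.sum_congr rfl fun k _ => integral_finset_sum _ (fun l _ => hDint k l)
    _ = ∑ k ∈ Finset.range n, ∫ ω, ((μ[Z|F (k+1)]) ω - (μ[Z|F k]) ω)^2 ∂μ := by
        refine Finset.sum_congr rfl fun k hk => ?_
        rw [Finset.sum_eq_single k]
        · exact integral_congr_ae (Filter.Eventually.of_forall fun ω => by simp [sq])
        · intro l hl hlk
          rcases lt_or_gt_of_ne hlk with h | h
          · have := hcross l k h
            rw [← this]
            exact integral_congr_ae (Filter.Eventually.of_forall fun ω => by ring)
          · exact hcross k l h
        · intro h; exact absurd hk h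

/-- Efron–Stein inequality: for independent random variables `X₁, …, Xₙ` with values
in a measurable space `χ` and a measurable `g : χⁿ → ℝ` with `Z = g(X₁, …, Xₙ)`
square-integrable, `Var(Z) ≤ Σᵢ E[(Z − Eᵢ[Z])²]`, where `Eᵢ[Z]` is the conditional
expectation of `Z` given all the coordinates except the `i`-th. -/
theorem efron_stein_inequality {Ω χ : Type*} {mΩ : MeasurableSpace Ω}
    [MeasurableSpace χ] (μ : Measure Ω) [IsProbabilityMeasure μ]
    (n : ℕ) (X : Fin n → Ω → χ)
    (hmeas : ∀ i, Measurable (X i))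
    (hindep : iIndepFun X μ)
    (g : (Fin n → χ) → ℝ) (hg : Measurable g)
    (Z : Ω → ℝ) (hZ : Z = fun ω => g (fun i => X i ω))
    (hZ2 : MemLp Z 2 μ) :
    variance Z μ ≤
      ∑ i, ∫ ω, (Z ω -
        (μ[Z | ⨆ j ∈ Finset.univ.erase i, MeasurableSpace.comap (X j) inferInstance]) ω) ^ 2 ∂μ := by
  classical
  have hc : ∀ i : Fin n, MeasurableSpace.comap (X i) inferInstance ≤ mΩ :=
    fun i => (hmeas i).comap_le
  set F : ℕ → MeasurableSpace Ω := fun k =>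
    ⨆ j ∈ Finset.univ.filter (fun j : Fin n => (j : ℕ) < k),
      MeasurableSpace.comap (X j) inferInstance with hF
  have hFle : ∀ k, F k ≤ mΩ := fun k => iSup₂_le fun j _ => hc j
  have hGle : ∀ i : Fin n,
      (⨆ j ∈ Finset.univ.erase i, MeasurableSpace.comap (X j) inferInstance) ≤ mΩ :=
    fun i => iSup₂_le fun j _ => hc j
  have hFmono : Monotone F := by
    intro k l hkl
    refine iSup₂_le fun j hj => le_iSup₂ (f := fun j _ => MeasurableSpace.comap (X j)
      inferInstance) j ?_
    simp only [Finset.mem_filter, Finset.mem_univ, true_and] at hj ⊢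
    exact hj.trans_le hkl
  have hFG : ∀ i : Fin n, F (i : ℕ) ≤
      ⨆ j ∈ Finset.univ.erase i, MeasurableSpace.comap (X j) inferInstance := by
    intro i
    refine iSup₂_le fun j hj => le_iSup₂ (f := fun j _ => MeasurableSpace.comap (X j)
      inferInstance) j ?_
    simp only [Finset.mem_filter, Finset.mem_univ, true_and] at hj
    simp only [Finset.mem_erase, Finset.mem_univ, and_true]
    exact fun h => absurd hj (by simp [h])
  have hF0 : F 0 = ⊥ := by
    rw [hF]; simp
  have hFsucc : ∀ i : Fin n, F ((i : ℕ) + 1)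
      = F (i : ℕ) ⊔ MeasurableSpace.comap (X i) inferInstance := by
    intro i
    have hins : (Finset.univ.filter (fun j : Fin n => (j : ℕ) < (i : ℕ) + 1))
        = insert i (Finset.univ.filter (fun j : Fin n => (j : ℕ) < (i : ℕ))) := by
      ext j
      simp only [Finset.mem_filter, Finset.mem_univ, true_and, Finset.mem_insert,
        Nat.lt_succ_iff_lt_or_eq, ← Fin.val_inj]
      tauto
    rw [hF]
    simp only [hins, Finset.iSup_insert]
    rw [sup_comm]
  have hZi : Integrable Z μ := hZ2.integrable one_le_two
  have hXi : ∀ i : Fin n, Measurable[F n] (X i) := by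
    intro i
    have hle : MeasurableSpace.comap (X i) inferInstance ≤ F n := by
      rw [hF]
      exact le_iSup₂ (f := fun j _ => MeasurableSpace.comap (X j) inferInstance) i
        (by simp [i.isLt])
    exact measurable_iff_comap_le.mpr hle
  have hπ : Measurable[F n] (fun ω => fun i => X i ω) := by
    exact @measurable_pi_iff Ω (Fin n) (fun _ => χ) (F n) (fun _ => inferInstance) _ |>.mpr hXi
  have hZsm : Measurable[F n] Z := by
    rw [hZ]; exact hg.comp hπ
  have hFn : μ[Z | F n] = Z :=
    condExp_of_stronglyMeasurable (hFle n) hZsm.stronglyMeasurable hZi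
  have hiI : iIndep (fun i : Fin n => MeasurableSpace.comap (X i) inferInstance) μ :=
    hindep.iIndep
  rw [variance_eq_sum_sq_diff hFle hFmono n hZ2 hF0 hFn,
    ← Fin.sum_univ_eq_sum_range (fun k => ∫ ω, ((μ[Z|F (k+1)]) ω - (μ[Z|F k]) ω)^2 ∂μ) n]
  refine Finset.sum_le_sum fun i _ => ?_
  set G : Ω → ℝ :=
    μ[Z | ⨆ j ∈ Finset.univ.erase i, MeasurableSpace.comap (X j) inferInstance] with hGdef
  have hindep2 : Indep (⨆ j ∈ Finset.univ.erase i, MeasurableSpace.comap (X j) inferInstance)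
      (MeasurableSpace.comap (X i) inferInstance) μ := by
    have h2 := indep_iSup_of_disjoint (fun j => hc j) hiI
      (S := {j : Fin n | j ∈ Finset.univ.erase i}) (T := {i})
      (by simp [Set.disjoint_singleton_right])
    simpa using h2
  have hG2 : MemLp G 2 μ := memℒp_two_condexp (hGle i) hZ2
  have hsup : μ[G | F ((i : ℕ) + 1)] =ᵐ[μ] μ[G | F (i : ℕ)] := by
    rw [hFsucc i]
    exact condexp_sup_indep (hFG i) (hGle i) (hc i) hindep2 stronglyMeasurable_condExp
      integrable_condExp
  have htower : μ[G | F (i : ℕ)] =ᵐ[μ] μ[Z | F (i : ℕ)] :=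
    condExp_condExp_of_le (hFG i) (hGle i)
  have hcondW : μ[(fun ω => Z ω - G ω) | F ((i : ℕ) + 1)]
      =ᵐ[μ] fun ω => (μ[Z|F ((i : ℕ) + 1)]) ω - (μ[Z|F (i : ℕ)]) ω := by
    have h4 := condExp_sub (m := F ((i : ℕ) + 1)) (μ := μ) (f := Z) (g := G)
      hZi integrable_condExp
    refine h4.trans ?_
    filter_upwards [hsup.trans htower] with ω hω
    simp only [Pi.sub_apply]
    rw [hω]
  have hW2 : MemLp (fun ω => Z ω - G ω) 2 μ := hZ2.sub hG2
  calc ∫ ω, ((μ[Z|F ((i : ℕ) + 1)]) ω - (μ[Z|F (i : ℕ)]) ω)^2 ∂μ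
      = ∫ ω, ((μ[(fun ω => Z ω - G ω) | F ((i : ℕ) + 1)]) ω)^2 ∂μ := by
        refine integral_congr_ae ?_
        filter_upwards [hcondW] with ω hω
        rw [hω]
    _ ≤ ∫ ω, (Z ω - G ω)^2 ∂μ := integral_sq_condexp_le (hFle _) hW2
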